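/- arXiv:2509.16641 — 2 statements merged into one kernel-verified Lean document; each statement's English description precedes it below -/
import Mathlib

section
/- Let X ⊂ ℝ^d be relatively separated. For any s > d there exists a constant C > 0 such that for all k, l ∈ X: ∑_{n ∈ X} (1 + |k - n|)^{-s} (1 + |l - n|)^{-s} ≤ C (1 + |k - l|)^{-s}. -/
open scoped ENNReal

lemma aux_coord_le_norm {d : ℕ} (x : EuclideanSpace ℝ (Fin d)) (i : Fin d) : |x i| ≤ ‖x‖ := by
  rw [EuclideanSpace.norm_eq, ← Real.sqrt_sq_eq_abs]
  apply Real.sqrt_le_sqrt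
  have := Finset.single_le_sum (f := fun j => ‖x j‖ ^ 2) (fun j _ => sq_nonneg _)
    (Finset.mem_univ i)
  simpa [Real.norm_eq_abs, sq_abs] using this

lemma aux_abs_floor (x : ℝ) : |(⌊x⌋ : ℝ)| ≤ 1 + |x| := by
  rw [abs_le]
  constructor
  · have h1 := Int.lt_floor_add_one x
    have h2 := neg_abs_le x
    linarith
  · linarith [Int.floor_le x, le_abs_self x]

set_option maxHeartbeats 1000000 in
lemma aux_summable {t : ℝ} (ht : 1 < t) :
    Summable (fun j : ℤ => (1 + |(j : ℝ)|) ^ (-t)) := by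
  have h0 : Summable (fun n : ℕ => ((n : ℝ)) ^ (-t)) :=
    Real.summable_nat_rpow.2 (by linarith)
  have h1 : Summable (fun n : ℕ => (1 + |((n : ℤ) : ℝ)|) ^ (-t)) := by
    have h2 := h0.comp_injective (add_left_injective 1)
    refine h2.congr fun n => ?_
    simp only [Function.comp]
    norm_num [abs_of_nonneg, add_comm]
  apply Summable.of_nat_of_neg h1
  refine h1.congr fun n => ?_
  simp

open scoped ENNReal

lemma aux_tsum_pi (g : ℤ → ℝ≥0∞) :
    ∀ d : ℕ, (∑' m : Fin d → ℤ, ∏ i, g (m i)) = (∑' j : ℤ, g j) ^ d := by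
  intro d
  induction d with
  | zero =>
    rw [tsum_eq_single (fun i => (0:ℤ))
      (fun b hb => (hb (funext fun i => i.elim0)).elim)]
    simp
  | succ n ih =>
    rw [← Equiv.tsum_eq (Fin.consEquiv (fun _ => ℤ)) (fun m => ∏ i, g (m i))]
    have : ∀ p : ℤ × (Fin n → ℤ),
        (∏ i, g ((Fin.consEquiv (fun _ => ℤ)) p i)) = g p.1 * ∏ i : Fin n, g (p.2 i) := by
      intro p
      rw [Fin.prod_univ_succ]
      simp [Fin.consEquiv]
    calc (∑' p : ℤ × (Fin n → ℤ), ∏ i, g ((Fin.consEquiv (fun _ => ℤ)) p i))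
        = ∑' p : ℤ × (Fin n → ℤ), g p.1 * ∏ i : Fin n, g (p.2 i) := by
          exact tsum_congr this
      _ = ∑' a : ℤ, ∑' v : Fin n → ℤ, g a * ∏ i : Fin n, g (v i) := by
          exact ENNReal.tsum_prod (f := fun (a : ℤ) (w : Fin n → ℤ) => g a * ∏ i : Fin n, g (w i))
      _ = ∑' a : ℤ, g a * ∑' v : Fin n → ℤ, ∏ i : Fin n, g (v i) := by
          exact tsum_congr fun a => ENNReal.tsum_mul_left
      _ = (∑' a : ℤ, g a) * (∑' j : ℤ, g j) ^ n := by rw [ih, ENNReal.tsum_mul_right]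
      _ = (∑' j : ℤ, g j) ^ (n + 1) := by ring


lemma aux_weight {d : ℕ} {s : ℝ} (hs : (d : ℝ) < s) (x : ℝ) (hx : 0 ≤ x) (m : Fin d → ℤ)
    (hm : ∀ i, |(m i : ℝ)| ≤ 1 + x) :
    (1 + x) ^ (-s) ≤ 2 ^ s * ∏ i, (1 + |(m i : ℝ)|) ^ (-(s / d)) := by
  have hs0 : 0 < s := lt_of_le_of_lt (Nat.cast_nonneg d) hs
  have h2s : (0:ℝ) < 2 ^ s := Real.rpow_pos_of_pos (by norm_num) s
  rcases Nat.eq_zero_or_pos d with hd | hd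
  · subst hd
    rw [Finset.univ_eq_empty, Finset.prod_empty, mul_one]
    have h1 : (1 + x) ^ (-s) ≤ 1 :=
      Real.rpow_le_one_of_one_le_of_nonpos (by linarith) (by linarith)
    have h2 : (1:ℝ) ≤ 2 ^ s := by
      have := Real.rpow_le_rpow_of_exponent_le (by norm_num : (1:ℝ) ≤ 2) hs0.le
      simpa using this
    linarith
  · have hd0 : (0:ℝ) < d := by exact_mod_cast hd
    have hprod_nonneg : ∀ i ∈ Finset.univ, (0:ℝ) ≤ 1 + |(m i : ℝ)| := fun i _ => by positivity
    have hP : (∏ i, (1 + |(m i : ℝ)|)) ≤ (2 * (1 + x)) ^ d := by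
      calc (∏ i, (1 + |(m i : ℝ)|)) ≤ ∏ _i : Fin d, (2 * (1 + x)) := by
            apply Finset.prod_le_prod hprod_nonneg
            intro i _
            have := hm i
            linarith
        _ = (2 * (1 + x)) ^ d := by
            rw [Finset.prod_const, Finset.card_univ, Fintype.card_fin]
    have hPpos : (0:ℝ) < ∏ i, (1 + |(m i : ℝ)|) :=
      Finset.prod_pos fun i _ => by positivity
    have key : (∏ i, (1 + |(m i : ℝ)|) ^ (-(s / d))) = (∏ i, (1 + |(m i : ℝ)|)) ^ (-(s / d)) :=
      Real.finset_prod_rpow _ _ hprod_nonneg _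
    have h1 : ((2 * (1 + x)) ^ d : ℝ) ^ (-(s / d)) ≤ (∏ i, (1 + |(m i : ℝ)|)) ^ (-(s / d)) :=
      Real.rpow_le_rpow_of_nonpos hPpos hP (neg_nonpos.2 (by positivity))
    have h2x : (0:ℝ) ≤ 2 * (1 + x) := by linarith
    have h2 : ((2 * (1 + x)) ^ d : ℝ) ^ (-(s / d)) = 2 ^ (-s) * (1 + x) ^ (-s) := by
      rw [← Real.rpow_natCast (2 * (1 + x)) d, ← Real.rpow_mul h2x]
      have : (d : ℝ) * (-(s / d)) = -s := by field_simp
      rw [this, Real.mul_rpow (by norm_num) (by linarith)]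
    have h3 : 2 ^ s * (2 ^ (-s) * (1 + x) ^ (-s)) = (1 + x) ^ (-s) := by
      rw [← mul_assoc, Real.rpow_neg (by norm_num : (0:ℝ) ≤ 2), mul_inv_cancel₀ h2s.ne', one_mul]
    calc (1 + x) ^ (-s) = 2 ^ s * (2 ^ (-s) * (1 + x) ^ (-s)) := h3.symm
      _ = 2 ^ s * ((2 * (1 + x)) ^ d : ℝ) ^ (-(s / d)) := by rw [h2]
      _ ≤ 2 ^ s * (∏ i, (1 + |(m i : ℝ)|)) ^ (-(s / d)) := by
          exact mul_le_mul_of_nonneg_left h1 h2s.le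
      _ = 2 ^ s * ∏ i, (1 + |(m i : ℝ)|) ^ (-(s / d)) := by rw [key]

lemma aux_cross' {s : ℝ} (hs0 : 0 < s) {a b c : ℝ} (ha : 0 ≤ a) (hb : 0 ≤ b) (hc : 0 ≤ c)
    (hab : a ≤ b) (h : c ≤ a + b) :
    (1 + a) ^ (-s) * (1 + b) ^ (-s) ≤
      2 ^ s * (1 + c) ^ (-s) * ((1 + a) ^ (-s) + (1 + b) ^ (-s)) := by
  have h1 : (1 + c) / 2 ≤ 1 + b := by linarith
  have h2 : (1 + b) ^ (-s) ≤ ((1 + c) / 2) ^ (-s) :=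
    Real.rpow_le_rpow_of_nonpos (by linarith) h1 (by linarith)
  have h3 : ((1 + c) / 2) ^ (-s) = 2 ^ s * (1 + c) ^ (-s) := by
    rw [Real.div_rpow (by linarith) (by norm_num),
      Real.rpow_neg (by norm_num : (0:ℝ) ≤ 2), div_inv_eq_mul, mul_comm]
  have ha' : (0:ℝ) ≤ (1 + a) ^ (-s) := Real.rpow_nonneg (by linarith) _
  have hb' : (0:ℝ) ≤ (1 + b) ^ (-s) := Real.rpow_nonneg (by linarith) _
  have hc' : (0:ℝ) ≤ 2 ^ s * (1 + c) ^ (-s) := by positivity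
  calc (1 + a) ^ (-s) * (1 + b) ^ (-s)
      ≤ (1 + a) ^ (-s) * (2 ^ s * (1 + c) ^ (-s)) := by
        apply mul_le_mul_of_nonneg_left _ ha'
        rw [← h3]; exact h2
    _ = 2 ^ s * (1 + c) ^ (-s) * (1 + a) ^ (-s) := by ring
    _ ≤ 2 ^ s * (1 + c) ^ (-s) * ((1 + a) ^ (-s) + (1 + b) ^ (-s)) := by nlinarith

lemma aux_cross {s : ℝ} (hs0 : 0 < s) {a b c : ℝ} (ha : 0 ≤ a) (hb : 0 ≤ b) (hc : 0 ≤ c)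
    (h : c ≤ a + b) :
    (1 + a) ^ (-s) * (1 + b) ^ (-s) ≤
      2 ^ s * (1 + c) ^ (-s) * ((1 + a) ^ (-s) + (1 + b) ^ (-s)) := by
  rcases le_total a b with hab | hab
  · exact aux_cross' hs0 ha hb hc hab h
  · have := aux_cross' hs0 hb ha hc hab (by linarith)
    calc (1 + a) ^ (-s) * (1 + b) ^ (-s) = (1 + b) ^ (-s) * (1 + a) ^ (-s) := by ring
      _ ≤ 2 ^ s * (1 + c) ^ (-s) * ((1 + b) ^ (-s) + (1 + a) ^ (-s)) := this
      _ = 2 ^ s * (1 + c) ^ (-s) * ((1 + a) ^ (-s) + (1 + b) ^ (-s)) := by ring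

lemma aux_B {d : ℕ} (X : Set (EuclideanSpace ℝ (Fin d))) (R : ℕ)
    (hsep : ∀ x : EuclideanSpace ℝ (Fin d),
      {k ∈ X | ∀ i, x i ≤ k i ∧ k i ≤ x i + 1}.Finite ∧
      {k ∈ X | ∀ i, x i ≤ k i ∧ k i ≤ x i + 1}.ncard ≤ R)
    {s : ℝ} (hs : (d : ℝ) < s) :
    ∃ c0 : ℝ, 0 ≤ c0 ∧ ∀ y : EuclideanSpace ℝ (Fin d),
      (∑' n : X, ENNReal.ofReal ((1 + ‖y - (n : EuclideanSpace ℝ (Fin d))‖) ^ (-s)))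
        ≤ ENNReal.ofReal c0 := by
  classical
  have hs0 : 0 < s := lt_of_le_of_lt (Nat.cast_nonneg d) hs
  set g : ℤ → ℝ≥0∞ := fun j => ENNReal.ofReal ((1 + |(j : ℝ)|) ^ (-(s / d))) with hg
  set Total : ℝ≥0∞ :=
    ((R : ℝ≥0∞) + 1) * (ENNReal.ofReal (2 ^ s) * (∑' j : ℤ, g j) ^ d) with hTotal
  have htop : Total ≠ ⊤ := by
    have hpow : (∑' j : ℤ, g j) ^ d ≠ ⊤ := by
      rcases Nat.eq_zero_or_pos d with hd | hd
      · subst hd; simp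
      · have hd0 : (0:ℝ) < d := by exact_mod_cast hd
        have ht : 1 < s / d := (one_lt_div hd0).2 hs
        have hsum := aux_summable ht
        have heq : (∑' j : ℤ, g j)
            = ENNReal.ofReal (∑' j : ℤ, (1 + |(j : ℝ)|) ^ (-(s / d))) :=
          (ENNReal.ofReal_tsum_of_nonneg
            (fun j => Real.rpow_nonneg (by positivity) _) hsum).symm
        rw [heq]
        exact ENNReal.pow_ne_top ENNReal.ofReal_ne_top
    exact ENNReal.mul_ne_top (by simp) (ENNReal.mul_ne_top ENNReal.ofReal_ne_top hpow)
  refine ⟨Total.toReal, ENNReal.toReal_nonneg, fun y => ?_⟩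
  rw [ENNReal.ofReal_toReal htop]
  set φ : X → (Fin d → ℤ) :=
    fun n => fun i => ⌊(n : EuclideanSpace ℝ (Fin d)) i - y i⌋ with hφ
  have hfib : ∀ m : Fin d → ℤ, ∃ f : X → Fin (R + 1), Set.InjOn f {n : X | φ n = m} := by
    intro m
    set x : EuclideanSpace ℝ (Fin d) := WithLp.toLp 2 (fun i => y i + (m i : ℝ)) with hx
    obtain ⟨hfin, hcard⟩ := hsep x
    set S := {k ∈ X | ∀ i, x i ≤ k i ∧ k i ≤ x i + 1} with hS
    have hmem : ∀ n : X, φ n = m → (n : EuclideanSpace ℝ (Fin d)) ∈ S := by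
      intro n hn
      refine ⟨n.2, fun i => ?_⟩
      have h1 : (m i : ℝ) ≤ (n : EuclideanSpace ℝ (Fin d)) i - y i := by
        rw [← congrFun hn i]; exact Int.floor_le _
      have h2 : (n : EuclideanSpace ℝ (Fin d)) i - y i < m i + 1 := by
        rw [← congrFun hn i]; exact Int.lt_floor_add_one _
      constructor
      · show y i + (m i : ℝ) ≤ _
        linarith
      · show _ ≤ y i + (m i : ℝ) + 1
        linarith
    haveI := hfin.fintype
    have hcard' : Nat.card S ≤ R := by
      rwa [Nat.card_coe_set_eq]
    have hA : Function.Injective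
        (fun n : {n : X // φ n = m} => (⟨(n.1 : EuclideanSpace ℝ (Fin d)), hmem n.1 n.2⟩ : S)) := by
      intro p q hpq
      simp only [Subtype.mk.injEq] at hpq
      exact Subtype.ext (Subtype.ext hpq)
    haveI : Finite {n : X // φ n = m} := Finite.of_injective _ hA
    haveI : Fintype {n : X // φ n = m} := Fintype.ofFinite _
    have hcardA : Fintype.card {n : X // φ n = m} ≤ R + 1 := by
      have h1 : Nat.card {n : X // φ n = m} ≤ Nat.card S :=
        Nat.card_le_card_of_injective _ hA
      rw [Nat.card_eq_fintype_card] at h1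
      omega
    set e := Fintype.equivFin {n : X // φ n = m} with he
    refine ⟨fun n => if h : φ n = m then Fin.castLE hcardA (e ⟨n, h⟩) else 0, ?_⟩
    intro p hp q hq hpq
    simp only [Set.mem_setOf_eq] at hp hq
    simp only [dif_pos hp, dif_pos hq] at hpq
    have := e.injective (Fin.castLE_injective _ hpq)
    exact congrArg Subtype.val this
  choose f hf using hfib
  set ι : X → (Fin d → ℤ) × Fin (R + 1) := fun n => (φ n, f (φ n) n) with hι
  have hinj : Function.Injective ι := by
    intro n n' h
    have h1 : φ n = φ n' := congrArg Prod.fst h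
    have h2 : f (φ n) n = f (φ n') n' := congrArg Prod.snd h
    rw [← h1] at h2
    exact hf (φ n) rfl h1.symm h2
  set W : (Fin d → ℤ) → ℝ≥0∞ :=
    fun m => ENNReal.ofReal (2 ^ s * ∏ i, (1 + |(m i : ℝ)|) ^ (-(s / d))) with hW
  have hpoint : ∀ n : X,
      ENNReal.ofReal ((1 + ‖y - (n : EuclideanSpace ℝ (Fin d))‖) ^ (-s)) ≤ W (φ n) := by
    intro n
    apply ENNReal.ofReal_le_ofReal
    apply aux_weight hs _ (norm_nonneg _)
    intro i
    have h1 : |(φ n i : ℝ)| ≤ 1 + |(n : EuclideanSpace ℝ (Fin d)) i - y i| := aux_abs_floor _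
    have h2 : |(n : EuclideanSpace ℝ (Fin d)) i - y i| ≤ ‖y - (n : EuclideanSpace ℝ (Fin d))‖ := by
      rw [abs_sub_comm]
      have h3 := aux_coord_le_norm (y - (n : EuclideanSpace ℝ (Fin d))) i
      simpa [PiLp.sub_apply] using h3
    linarith
  calc (∑' n : X, ENNReal.ofReal ((1 + ‖y - (n : EuclideanSpace ℝ (Fin d))‖) ^ (-s)))
      ≤ ∑' n : X, W (φ n) := ENNReal.tsum_le_tsum hpoint
    _ = ∑' n : X, (fun p : (Fin d → ℤ) × Fin (R + 1) => W p.1) (ι n) := rfl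
    _ ≤ ∑' p : (Fin d → ℤ) × Fin (R + 1), W p.1 :=
        ENNReal.tsum_comp_le_tsum_of_injective hinj _
    _ = ∑' m : Fin d → ℤ, ∑' _r : Fin (R + 1), W m := by
        exact ENNReal.tsum_prod (f := fun m (_ : Fin (R + 1)) => W m)
    _ = ∑' m : Fin d → ℤ, ((R : ℝ≥0∞) + 1) * W m := by
        refine tsum_congr fun m => ?_
        rw [tsum_fintype]
        simp [Finset.sum_const, Finset.card_univ, nsmul_eq_mul]
    _ = ((R : ℝ≥0∞) + 1) * ∑' m : Fin d → ℤ, W m := ENNReal.tsum_mul_left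
    _ = Total := by
        rw [hTotal]
        congr 1
        rw [← aux_tsum_pi g d, ← ENNReal.tsum_mul_left]
        refine tsum_congr fun m => ?_
        show ENNReal.ofReal (2 ^ s * ∏ i, (1 + |(m i : ℝ)|) ^ (-(s / d))) = _
        rw [ENNReal.ofReal_mul (by positivity)]
        congr 1
        rw [ENNReal.ofReal_prod_of_nonneg
          (fun i _ => Real.rpow_nonneg (by positivity) _)]


theorem stmt_9 (d : ℕ) (X : Set (EuclideanSpace ℝ (Fin d)))
    (hX : X.Countable) (R : ℕ)
    (hsep : ∀ x : EuclideanSpace ℝ (Fin d),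
      {k ∈ X | ∀ i, x i ≤ k i ∧ k i ≤ x i + 1}.Finite ∧
      {k ∈ X | ∀ i, x i ≤ k i ∧ k i ≤ x i + 1}.ncard ≤ R)
    (s : ℝ) (hs : (d : ℝ) < s) :
    ∃ C : ℝ, 0 < C ∧ ∀ k ∈ X, ∀ l ∈ X,
      ∑' n : X, ENNReal.ofReal
          ((1 + ‖k - (n : EuclideanSpace ℝ (Fin d))‖) ^ (-s) *
            (1 + ‖l - (n : EuclideanSpace ℝ (Fin d))‖) ^ (-s))
        ≤ ENNReal.ofReal (C * (1 + ‖k - l‖) ^ (-s)) := by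
  obtain ⟨c0, hc0, hB⟩ := aux_B X R hsep hs
  have hs0 : 0 < s := lt_of_le_of_lt (Nat.cast_nonneg d) hs
  refine ⟨2 ^ s * (2 * c0) + 1, by positivity, fun k hk l hl => ?_⟩
  set c := ‖k - l‖ with hc
  have hcn : 0 ≤ c := norm_nonneg _
  have hKnn : (0:ℝ) ≤ 2 ^ s * (1 + c) ^ (-s) := by positivity
  calc (∑' n : X, ENNReal.ofReal
          ((1 + ‖k - (n : EuclideanSpace ℝ (Fin d))‖) ^ (-s) *
            (1 + ‖l - (n : EuclideanSpace ℝ (Fin d))‖) ^ (-s)))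
      ≤ ∑' n : X, ENNReal.ofReal (2 ^ s * (1 + c) ^ (-s) *
          ((1 + ‖k - (n : EuclideanSpace ℝ (Fin d))‖) ^ (-s) +
            (1 + ‖l - (n : EuclideanSpace ℝ (Fin d))‖) ^ (-s))) := by
        apply ENNReal.tsum_le_tsum
        intro n
        apply ENNReal.ofReal_le_ofReal
        apply aux_cross hs0 (norm_nonneg _) (norm_nonneg _) hcn
        calc c = ‖(k - (n : EuclideanSpace ℝ (Fin d))) - (l - (n : EuclideanSpace ℝ (Fin d)))‖ := by
              rw [sub_sub_sub_cancel_right]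
          _ ≤ ‖k - (n : EuclideanSpace ℝ (Fin d))‖ + ‖l - (n : EuclideanSpace ℝ (Fin d))‖ :=
              norm_sub_le _ _
    _ = ENNReal.ofReal (2 ^ s * (1 + c) ^ (-s)) *
        ((∑' n : X, ENNReal.ofReal ((1 + ‖k - (n : EuclideanSpace ℝ (Fin d))‖) ^ (-s))) +
         (∑' n : X, ENNReal.ofReal ((1 + ‖l - (n : EuclideanSpace ℝ (Fin d))‖) ^ (-s)))) := by
        rw [← ENNReal.tsum_add, ← ENNReal.tsum_mul_left]
        refine tsum_congr fun n => ?_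
        rw [ENNReal.ofReal_mul hKnn, ENNReal.ofReal_add (by positivity) (by positivity)]
    _ ≤ ENNReal.ofReal (2 ^ s * (1 + c) ^ (-s)) * (ENNReal.ofReal c0 + ENNReal.ofReal c0) :=
        mul_le_mul_right (add_le_add (hB k) (hB l)) _
    _ ≤ ENNReal.ofReal ((2 ^ s * (2 * c0) + 1) * (1 + c) ^ (-s)) := by
        rw [← ENNReal.ofReal_add hc0 hc0, ← ENNReal.ofReal_mul hKnn]
        apply ENNReal.ofReal_le_ofReal
        have hw : (0:ℝ) ≤ (1 + c) ^ (-s) := by positivity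
        nlinarith [hw]
end

section
/- (Hulanicki's lemma for p-Banach algebras, one direction) Let 0 < p ≤ 1, let B be a unital p-Banach *-algebra, and let A ⊆ B be a *-subalgebra containing the unit, equipped with a complete p-norm making it a p-Banach algebra. If the spectral radii satisfy r_A(a) ≤ r_B(a) for all self-adjoint a ∈ A, then r_A(a) = r_B(a) for all self-adjoint a ∈ A, and consequently σ_A(a) = σ_B(a) for all a ∈ A, i.e., A is inverse closed in B. -/
open scoped ENNReal

/-- The `p`-spectral radius `sup { |λ|^p : λ ∈ σ }` of a spectrum, in `ℝ≥0∞`. -/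
noncomputable def pSpecRadius (p : ℝ) (σ : Set ℂ) : ℝ≥0∞ :=
  ⨆ z ∈ σ, ENNReal.ofReal (‖z‖ ^ p)

/-- `n` is a `p`-norm on the algebra `B`. -/
def IsPNorm (p : ℝ) {B : Type*} [Ring B] [Algebra ℂ B] (n : B → ℝ) : Prop :=
  (∀ x, 0 ≤ n x) ∧ (∀ x, n x = 0 ↔ x = 0) ∧
    (∀ x y, n (x + y) ≤ n x + n y) ∧
    (∀ (α : ℂ) (x : B), n (α • x) = ‖α‖ ^ p * n x) ∧
    (∀ x y, n (x * y) ≤ n x * n y)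

/-- Completeness of a `p`-norm `n`, expressed via Cauchy sequences. -/
def IsPComplete {B : Type*} [Ring B] (n : B → ℝ) : Prop :=
  ∀ u : ℕ → B,
    (∀ ε : ℝ, 0 < ε → ∃ N, ∀ i ≥ N, ∀ j ≥ N, n (u i - u j) < ε) →
    ∃ x : B, ∀ ε : ℝ, 0 < ε → ∃ N, ∀ i ≥ N, n (u i - x) < ε

section Aux
variable {p : ℝ} {B : Type*} [Ring B] [Algebra ℂ B] {n : B → ℝ}

lemma pnorm_neg (hn : IsPNorm p n) (x : B) : n (-x) = n x := by
  have := hn.2.2.2.1 (-1 : ℂ) x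
  simpa [Real.one_rpow] using this

lemma pnorm_zero (hn : IsPNorm p n) : n 0 = 0 := (hn.2.1 0).mpr rfl

lemma pnorm_sum (hn : IsPNorm p n) {ι : Type*} (s : Finset ι) (f : ι → B) :
    n (∑ i ∈ s, f i) ≤ ∑ i ∈ s, n (f i) := by
  classical
  induction s using Finset.induction_on with
  | empty => simp [pnorm_zero hn]
  | insert _ _ hx ih =>
      rename_i a s
      rw [Finset.sum_insert hx, Finset.sum_insert hx]
      exact le_trans (hn.2.2.1 _ _) (by linarith)

lemma pnorm_pow (hn : IsPNorm p n) (c : B) : ∀ m, 1 ≤ m → n (c ^ m) ≤ n c ^ m := by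
  intro m hm
  induction m with
  | zero => omega
  | succ k ih =>
      rcases Nat.eq_or_lt_of_le hm with h | h
      · simp [← h]
      · have hk : 1 ≤ k := by omega
        have := hn.2.2.2.2 (c ^ k) c
        rw [pow_succ, pow_succ]
        calc n (c ^ k * c) ≤ n (c ^ k) * n c := this
        _ ≤ n c ^ k * n c :=
            mul_le_mul_of_nonneg_right (ih hk) (hn.1 c)

/-- Neumann series: if `n c < 1` then `1 - c` is a unit, in a complete p-normed algebra. -/
lemma geom_unit (hn : IsPNorm p n) (hnc : IsPComplete n) {c : B} (hc : n c < 1) :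
    IsUnit (1 - c) := by
  set q := n c with hq
  have hq0 : 0 ≤ q := hn.1 c
  have h1q : 0 < 1 - q := by linarith
  set u : ℕ → B := fun k => ∑ j ∈ Finset.range k, c ^ j with hu
  -- bound on partial-sum differences
  have hbound : ∀ i j, 1 ≤ j → j ≤ i → n (u i - u j) ≤ q ^ j / (1 - q) := by
    intro i j hj1 hji
    have hsub : u i - u j = ∑ m ∈ Finset.Ico j i, c ^ m := by
      rw [hu]; exact (Finset.sum_Ico_eq_sub _ hji).symm
    rw [hsub]
    calc n (∑ m ∈ Finset.Ico j i, c ^ m) ≤ ∑ m ∈ Finset.Ico j i, n (c ^ m) :=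
          pnorm_sum hn _ _
    _ ≤ ∑ m ∈ Finset.Ico j i, q ^ m := by
          apply Finset.sum_le_sum
          intro m hm
          exact pnorm_pow hn c m (le_trans hj1 (Finset.mem_Ico.mp hm).1)
    _ = (q ^ i - q ^ j) / (q - 1) := geom_sum_Ico (by intro h; rw [h] at hc; linarith) hji
    _ = (q ^ j - q ^ i) / (1 - q) := by
          rw [div_eq_div_iff (by linarith) (by linarith)]; ring
    _ ≤ q ^ j / (1 - q) := by
          gcongr
          linarith [pow_nonneg hq0 i]
  -- the sequence is Cauchy
  have hcauchy : ∀ ε : ℝ, 0 < ε → ∃ N, ∀ i ≥ N, ∀ j ≥ N, n (u i - u j) < ε := by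
    intro ε hε
    obtain ⟨N, hN⟩ := exists_pow_lt_of_lt_one (x := ε * (1 - q)) (y := q)
      (by positivity) hc
    refine ⟨N + 1, ?_⟩
    intro i hi j hj
    have key : ∀ i j : ℕ, N + 1 ≤ j → j ≤ i → n (u i - u j) < ε := by
      intro i j hj hji
      have h1 : n (u i - u j) ≤ q ^ j / (1 - q) := hbound i j (by omega) hji
      have h2 : q ^ j ≤ q ^ N := pow_le_pow_of_le_one hq0 (le_of_lt hc) (by omega)
      have : q ^ j / (1 - q) < ε := by
        rw [div_lt_iff₀ h1q]; linarith
      linarith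
    rcases le_total j i with h | h
    · exact key i j hj h
    · rw [← pnorm_neg hn, neg_sub]; exact key j i hi h
  obtain ⟨x, hx⟩ := hnc u hcauchy
  -- auxiliary: an element with arbitrarily small norm is zero
  have hzero : ∀ z : B, (∀ ε : ℝ, 0 < ε → n z < ε) → z = 0 := by
    intro z hz
    have : n z ≤ 0 := by
      by_contra h
      push_neg at h
      exact lt_irrefl _ (hz (n z) h)
    exact (hn.2.1 z).mp (le_antisymm this (hn.1 z))
  have hqpow : ∀ ε : ℝ, 0 < ε → ∃ N, ∀ i ≥ N + 1, n (c ^ i) < ε := by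
    intro ε hε
    obtain ⟨N, hN⟩ := exists_pow_lt_of_lt_one hε hc
    refine ⟨N, fun i hi => lt_of_le_of_lt (pnorm_pow hn c i (by omega)) ?_⟩
    calc q ^ i ≤ q ^ N := pow_le_pow_of_le_one hq0 (le_of_lt hc) (by omega)
    _ < ε := hN
  -- both products equal 1
  have hmain : ∀ v : B, (∀ k, v * u k = 1 - c ^ k) → v * x = 1 := by
    intro v hv
    apply sub_eq_zero.mp
    apply hzero
    intro ε hε
    have hnv : 0 ≤ n v := hn.1 v
    obtain ⟨N1, hN1⟩ := hx (ε / (2 * (n v + 1))) (div_pos hε (by linarith))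
    obtain ⟨N2, hN2⟩ := hqpow (ε / 2) (by positivity)
    set i := N1 + N2 + 1 with hi
    have e1 : v * x - 1 = v * (x - u i) + (v * u i - 1) := by noncomm_ring
    have e2 : n (v * x - 1) ≤ n (v * (x - u i)) + n (v * u i - 1) := by
      rw [e1]; exact hn.2.2.1 _ _
    have e3 : n (v * (x - u i)) ≤ n v * n (x - u i) := hn.2.2.2.2 _ _
    have e4 : n (x - u i) < ε / (2 * (n v + 1)) := by
      rw [← pnorm_neg hn, neg_sub]; exact hN1 i (by omega)
    have e5 : n (v * u i - 1) < ε / 2 := by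
      rw [hv i]
      have : (1 : B) - c ^ i - 1 = -(c ^ i) := by noncomm_ring
      rw [this, pnorm_neg hn]
      exact hN2 i (by omega)
    have e6 : n v * n (x - u i) ≤ (n v + 1) * (ε / (2 * (n v + 1))) := by
      apply mul_le_mul (by linarith) (le_of_lt e4) (hn.1 _) (by linarith)
    have e7 : (n v + 1) * (ε / (2 * (n v + 1))) = ε / 2 := by
      have h : n v + 1 ≠ 0 := by linarith
      field_simp
    linarith
  have hone : (1 - c) * x = 1 := by
    apply hmain
    intro k
    have := mul_geom_sum c k
    have h2 : (1 - c) * u k = -((c - 1) * ∑ j ∈ Finset.range k, c ^ j) := by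
      rw [hu]; noncomm_ring
    rw [h2, this]; noncomm_ring
  -- similarly on the other side, using that x commutes computations
  have hmain2 : x * (1 - c) = 1 := by
    apply sub_eq_zero.mp
    apply hzero
    intro ε hε
    have hnv : 0 ≤ n (1 - c) := hn.1 _
    obtain ⟨N1, hN1⟩ := hx (ε / (2 * (n (1 - c) + 1))) (div_pos hε (by linarith))
    obtain ⟨N2, hN2⟩ := hqpow (ε / 2) (by positivity)
    set i := N1 + N2 + 1 with hi
    have e1 : x * (1 - c) - 1 = (x - u i) * (1 - c) + (u i * (1 - c) - 1) := by noncomm_ring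
    have e2 : n (x * (1 - c) - 1) ≤ n ((x - u i) * (1 - c)) + n (u i * (1 - c) - 1) := by
      rw [e1]; exact hn.2.2.1 _ _
    have e3 : n ((x - u i) * (1 - c)) ≤ n (x - u i) * n (1 - c) := hn.2.2.2.2 _ _
    have e4 : n (x - u i) < ε / (2 * (n (1 - c) + 1)) := by
      rw [← pnorm_neg hn, neg_sub]; exact hN1 i (by omega)
    have e5 : n (u i * (1 - c) - 1) < ε / 2 := by
      have hg := geom_sum_mul c i
      have h2 : u i * (1 - c) = -((∑ j ∈ Finset.range i, c ^ j) * (c - 1)) := by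
        rw [hu]; noncomm_ring
      rw [h2, hg]
      have : -(c ^ i - 1) - 1 = -(c ^ i) := by noncomm_ring
      rw [this, pnorm_neg hn]
      exact hN2 i (by omega)
    have e6 : n (x - u i) * n (1 - c) ≤ (ε / (2 * (n (1 - c) + 1))) * (n (1 - c) + 1) := by
      apply mul_le_mul (le_of_lt e4) (by linarith) (hn.1 _) (by positivity)
    have e7 : (ε / (2 * (n (1 - c) + 1))) * (n (1 - c) + 1) = ε / 2 := by
      have h : n (1 - c) + 1 ≠ 0 := by linarith
      field_simp
    linarith
  exact ⟨⟨1 - c, x, hone, hmain2⟩, rfl⟩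

/-- upper bound of the spectrum via the norm -/
lemma spec_upper (hp0 : 0 < p) (hn : IsPNorm p n) (hnc : IsPComplete n) (b : B)
    {lam : ℂ} (hl : lam ∈ spectrum ℂ b) : ‖lam‖ ^ p ≤ n b := by
  by_contra h
  push_neg at h
  have hb0 : 0 ≤ n b := hn.1 b
  have habs : 0 < ‖lam‖ ^ p := lt_of_le_of_lt hb0 h
  have hlam : lam ≠ 0 := by
    intro h0
    rw [h0] at habs
    simp [Real.zero_rpow (ne_of_gt hp0)] at habs
  have hinv : n (lam⁻¹ • b) < 1 := by
    rw [hn.2.2.2.1]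
    rw [norm_inv, Real.inv_rpow (norm_nonneg _)]
    rw [inv_mul_lt_iff₀ habs]
    simpa using h
  obtain ⟨v, hv⟩ := geom_unit hn hnc hinv
  have hunit : IsUnit (algebraMap ℂ B lam - b) := by
    have he : algebraMap ℂ B lam - b = lam • ((1 : B) - lam⁻¹ • b) := by
      rw [smul_sub, Algebra.algebraMap_eq_smul_one, smul_smul, mul_inv_cancel₀ hlam, one_smul]
    rw [he]
    have : IsUnit ((1:B) - lam⁻¹ • b) := ⟨v, hv⟩
    obtain ⟨w, hw1, hw2⟩ := isUnit_iff_exists.mp this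
    apply isUnit_iff_exists.mpr
    refine ⟨lam⁻¹ • w, ?_, ?_⟩
    · rw [smul_mul_smul_comm, mul_inv_cancel₀ hlam, hw1, one_smul]
    · rw [smul_mul_smul_comm, inv_mul_cancel₀ hlam, hw2, one_smul]
  exact (spectrum.mem_iff.mp hl) hunit

/-- lower bound of the spectrum of an invertible element -/
lemma spec_lower (hn : IsPNorm p n) (hnc : IsPComplete n) {b w : B}
    (hw1 : b * w = 1) (hw2 : w * b = 1)
    {lam : ℂ} (hl : lam ∈ spectrum ℂ b) : 1 ≤ ‖lam‖ ^ p * n w := by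
  by_contra h
  push_neg at h
  have hinv : n (lam • w) < 1 := by rw [hn.2.2.2.1]; exact h
  obtain ⟨v, hv⟩ := geom_unit hn hnc hinv
  have hunit : IsUnit (algebraMap ℂ B lam - b) := by
    have he : algebraMap ℂ B lam - b = -(b * ((1:B) - lam • w)) := by
      rw [mul_sub, mul_smul_comm, hw1, mul_one, Algebra.algebraMap_eq_smul_one]
      noncomm_ring
    rw [he]
    apply IsUnit.neg
    exact (isUnit_iff_exists.mpr ⟨w, hw1, hw2⟩).mul ⟨v, hv⟩
  exact (spectrum.mem_iff.mp hl) hunit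

/-- square root decomposition of the spectrum of a square -/
lemma spec_sq {b : B} {mu : ℂ} (hmu : mu ∈ spectrum ℂ (b * b)) :
    ∃ nu : ℂ, nu ^ 2 = mu ∧ (nu ∈ spectrum ℂ b ∨ -nu ∈ spectrum ℂ b) := by
  obtain ⟨nu, hnu⟩ := IsAlgClosed.exists_pow_nat_eq mu (n := 2) (by norm_num)
  refine ⟨nu, hnu, ?_⟩
  by_contra h
  push_neg at h
  obtain ⟨h1, h2⟩ := h
  rw [spectrum.mem_iff, not_not] at h1 h2
  have hfact : (algebraMap ℂ B nu - b) * (algebraMap ℂ B nu + b) =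
      algebraMap ℂ B mu - b * b := by
    rw [← hnu, Algebra.algebraMap_eq_smul_one, Algebra.algebraMap_eq_smul_one]
    have e : (nu ^ 2) • (1:B) = (nu • (1:B)) * (nu • (1:B)) := by
      rw [smul_mul_smul_comm, one_mul, pow_two]
    rw [e]
    simp only [sub_mul, mul_add, add_mul, smul_mul_assoc, mul_smul_comm, one_mul, mul_one]
    noncomm_ring
    module
  have h2' : IsUnit (algebraMap ℂ B nu + b) := by
    have : algebraMap ℂ B nu + b = -(algebraMap ℂ B (-nu) - b) := by
      rw [map_neg]; noncomm_ring
    rw [this]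
    exact h2.neg
  have := (h1.mul h2')
  rw [hfact] at this
  exact (spectrum.mem_iff.mp hmu) this

end Aux

theorem stmt_17 (p : ℝ) (hp0 : 0 < p) (hp1 : p ≤ 1)
    (B : Type*) [Ring B] [Algebra ℂ B] [StarRing B] [StarModule ℂ B]
    (nB : B → ℝ) (hnB : IsPNorm p nB) (hnBc : IsPComplete nB)
    (hnBstar : ∀ x : B, nB (star x) = nB x)
    -- `B` is symmetric: self-adjoint elements have real spectrum
    (hsymm : ∀ b : B, star b = b → ∀ z ∈ spectrum ℂ b, z.im = 0)
    -- `S` is a star-subalgebra of `B` containing the unit, with its own complete `p`-norm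
    (S : StarSubalgebra ℂ B)
    (nA : S → ℝ) (hnA : IsPNorm p nA) (hnAc : IsPComplete nA)
    (hnAstar : ∀ x : S, nA (star x) = nA x)
    -- hypothesis: `r_A(a) ≤ r_B(a)` for all self-adjoint `a ∈ S`
    (hrad : ∀ a : S, star a = a →
      pSpecRadius p (spectrum ℂ a) ≤ pSpecRadius p (spectrum ℂ (a : B))) :
    (∀ a : S, star a = a →
      pSpecRadius p (spectrum ℂ a) = pSpecRadius p (spectrum ℂ (a : B))) ∧
    (∀ a : S, spectrum ℂ a = spectrum ℂ (a : B)) ∧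
    (∀ a : S, IsUnit (a : B) → ∃ b : S, b * a = 1 ∧ a * b = 1) := by
  obtain htriv | hnontriv := subsingleton_or_nontrivial B
  · haveI : Subsingleton S := ⟨fun a b => Subtype.ext (Subsingleton.elim _ _)⟩
    have h1 : ∀ a : S, spectrum ℂ a = spectrum ℂ (a : B) := by
      intro a
      have e1 : spectrum ℂ a = ∅ := by
        ext z; simp [spectrum.mem_iff, isUnit_of_subsingleton]
      have e2 : spectrum ℂ (a : B) = ∅ := by
        ext z; simp [spectrum.mem_iff, isUnit_of_subsingleton]
      rw [e1, e2]
    exact ⟨fun a _ => by rw [h1], h1,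
      fun a _ => ⟨1, Subsingleton.elim _ _, Subsingleton.elim _ _⟩⟩
  -- main case
  have key2 : ∀ g : S, star g = g → IsUnit (g : B) → IsUnit (g * g) := by
    intro g hg hgB
    set b : B := (g : B) with hbdef
    obtain ⟨u, hu⟩ := hgB
    have hw1 : b * ↑u⁻¹ = 1 := by rw [← hu]; exact u.mul_inv
    have hw2 : (↑u⁻¹ : B) * b = 1 := by rw [← hu]; exact u.inv_mul
    set w : B := (↑u⁻¹ : B) with hwdef
    have hbstar : star b = b := congrArg Subtype.val hg
    have hw0 : 0 < nB w := by
      rcases (hnB.1 w).lt_or_eq with h | h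
      · exact h
      · exfalso
        have : w = 0 := (hnB.2.1 w).mp h.symm
        rw [this, mul_zero] at hw1
        exact one_ne_zero hw1.symm
    set m : ℝ := ((nB w)⁻¹) ^ (2 / p) with hmdef
    have hm0 : 0 < m := Real.rpow_pos_of_pos (inv_pos.mpr hw0) _
    set M : ℝ := max ((nB b) ^ (2 / p)) m with hMdef
    have hmM : m ≤ M := le_max_right _ _
    set c : ℝ := (m + M) / 2 with hcdef
    have hc0 : 0 < c := by rw [hcdef]; linarith
    -- spectral bound in B
    have hKb : ∀ z ∈ spectrum ℂ (b * b - algebraMap ℂ B (c : ℂ)),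
        ‖z‖ ≤ (M - m) / 2 := by
      intro z hz
      have hz' : (z + c) ∈ spectrum ℂ (b * b) := by
        rw [spectrum.mem_iff] at hz ⊢
        intro HU
        apply hz
        have e : algebraMap ℂ B (z + c) - b * b
            = algebraMap ℂ B z - (b * b - algebraMap ℂ B (c : ℂ)) := by
          rw [map_add]; abel
        rw [e] at HU
        exact HU
      obtain ⟨nu, hnu2, hnu⟩ := spec_sq hz'
      have him : nu.im = 0 := by
        rcases hnu with h | h
        · exact hsymm b hbstar nu h
        · have := hsymm b hbstar _ h
          simpa using this
      have habs : ‖nu‖ = |nu.re| := by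
        rw [Complex.norm_def, Complex.normSq_apply, him]
        rw [← Real.sqrt_sq_eq_abs, sq]
        norm_num
      have hup : ‖nu‖ ^ p ≤ nB b := by
        rcases hnu with h | h
        · exact spec_upper hp0 hnB hnBc b h
        · have := spec_upper hp0 hnB hnBc b h
          rwa [norm_neg] at this
      have hlow : (nB w)⁻¹ ≤ ‖nu‖ ^ p := by
        have h1 : 1 ≤ ‖nu‖ ^ p * nB w := by
          rcases hnu with h | h
          · exact spec_lower hnB hnBc hw1 hw2 h
          · have := spec_lower hnB hnBc hw1 hw2 h
            rwa [norm_neg] at this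
        rw [inv_eq_one_div, div_le_iff₀ hw0]
        exact h1
      have hrpow : (‖nu‖ ^ p) ^ (2 / p) = nu.re ^ 2 := by
        rw [← Real.rpow_mul (norm_nonneg nu)]
        rw [show p * (2 / p) = (2 : ℝ) by field_simp]
        rw [show ((2 : ℝ)) = ((2 : ℕ) : ℝ) by norm_num, Real.rpow_natCast, habs, sq_abs]
      have ht2a : m ≤ nu.re ^ 2 := by
        rw [← hrpow, hmdef]
        exact Real.rpow_le_rpow (inv_nonneg.mpr (le_of_lt hw0)) hlow (by positivity)
      have ht2b : nu.re ^ 2 ≤ M := by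
        rw [← hrpow]
        calc (‖nu‖ ^ p) ^ (2 / p) ≤ (nB b) ^ (2 / p) :=
              Real.rpow_le_rpow (Real.rpow_nonneg (norm_nonneg nu) p) hup
                (by positivity)
        _ ≤ M := le_max_left _ _
      have hz2 : z = ((nu.re ^ 2 - c : ℝ) : ℂ) := by
        have hnuc : nu = (nu.re : ℂ) := Complex.ext rfl (by simp [him])
        have h2 : z + c = ((nu.re : ℂ)) ^ 2 := by conv_lhs => rw [← hnu2, hnuc]
        push_cast
        linear_combination h2
      rw [hz2, Complex.norm_real, Real.norm_eq_abs, abs_le]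
      constructor <;> [linarith; linarith]
    -- now the contradiction argument in S
    by_contra hH
    have hcspec : (-(c : ℂ)) ∈ spectrum ℂ (g * g - algebraMap ℂ S (c : ℂ)) := by
      rw [spectrum.mem_iff]
      intro HU
      apply hH
      have e : algebraMap ℂ S (-(c : ℂ)) - (g * g - algebraMap ℂ S (c : ℂ))
          = -(g * g) := by rw [map_neg]; abel
      rw [e] at HU
      simpa using HU.neg
    have hself : star (g * g - algebraMap ℂ S (c : ℂ)) = g * g - algebraMap ℂ S (c : ℂ) := by
      rw [star_sub, star_mul, hg, ← algebraMap_star_comm, Complex.star_def,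
        Complex.conj_ofReal]
    have hrle := hrad _ hself
    have hlow2 : ENNReal.ofReal (c ^ p)
        ≤ pSpecRadius p (spectrum ℂ (g * g - algebraMap ℂ S (c : ℂ))) := by
      rw [pSpecRadius]
      have := le_biSup (f := fun z => ENNReal.ofReal (‖z‖ ^ p)) hcspec
      simpa [Complex.norm_real, abs_of_pos hc0] using this
    have hup2 : pSpecRadius p (spectrum ℂ ((g * g - algebraMap ℂ S (c : ℂ) : S) : B))
        ≤ ENNReal.ofReal (((M - m) / 2) ^ p) := by
      rw [pSpecRadius]
      apply iSup₂_le
      intro z hz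
      have hz' : z ∈ spectrum ℂ (b * b - algebraMap ℂ B (c : ℂ)) := hz
      apply ENNReal.ofReal_le_ofReal
      exact Real.rpow_le_rpow (norm_nonneg _) (hKb z hz') (le_of_lt hp0)
    have hfin : ENNReal.ofReal (c ^ p) ≤ ENNReal.ofReal (((M - m) / 2) ^ p) :=
      hlow2.trans (hrle.trans hup2)
    rw [ENNReal.ofReal_le_ofReal_iff (Real.rpow_nonneg (by linarith) p)] at hfin
    have : ((M - m) / 2) ^ p < c ^ p :=
      Real.rpow_lt_rpow (by linarith) (by rw [hcdef]; linarith) hp0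
    linarith
  have key : ∀ a : S, IsUnit (a : B) → IsUnit a := by
    intro a ha
    have h1 : IsUnit ((star a * a : S) : B) := by
      have e : ((star a * a : S) : B) = star (a : B) * (a : B) := rfl
      rw [e]; exact ha.star.mul ha
    have hs1 : star (star a * a) = star a * a := by rw [star_mul, star_star]
    obtain ⟨k, hk1, hk2⟩ := isUnit_iff_exists.mp (key2 _ hs1 h1)
    have hy : (k * (star a * a) * star a) * a = 1 := by
      simp only [mul_assoc] at hk2 ⊢
      exact hk2
    have h2 : IsUnit ((a * star a : S) : B) := by
      have e : ((a * star a : S) : B) = (a : B) * star (a : B) := rfl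
      rw [e]; exact ha.mul ha.star
    have hs2 : star (a * star a) = a * star a := by rw [star_mul, star_star]
    obtain ⟨k', hk1', hk2'⟩ := isUnit_iff_exists.mp (key2 _ hs2 h2)
    have hz : a * (star a * ((a * star a) * k')) = 1 := by
      simp only [mul_assoc] at hk1' ⊢
      exact hk1'
    have hyz : (k * (star a * a) * star a) = star a * ((a * star a) * k') := by
      conv_lhs => rw [← mul_one (k * (star a * a) * star a), ← hz]
      rw [← mul_assoc, hy, one_mul]
    exact isUnit_iff_exists.mpr ⟨k * (star a * a) * star a, by rw [hyz]; exact hz, hy⟩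
  have hspec_eq : ∀ a : S, spectrum ℂ a = spectrum ℂ (a : B) := by
    intro a
    ext z
    rw [spectrum.mem_iff, spectrum.mem_iff]
    constructor
    · intro hz HU
      exact hz (key _ HU)
    · intro hz HU
      exact hz (HU.map S.subtype)
  refine ⟨fun a _ => by rw [hspec_eq], hspec_eq, fun a ha => ?_⟩
  obtain ⟨u, hu⟩ := key a ha
  exact ⟨↑u⁻¹, by rw [← hu]; exact u.inv_mul, by rw [← hu]; exact u.mul_inv⟩
end
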